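/- Let δ ∈ [0, 1) and let m : ℝ × ℝ → ℝ be a function such that for all a, b ≥ 0, m(a,b) ≥ 0 and |m(a,b) − sqrt(a² + b²)| ≤ δ·sqrt(a² + b²). For ℓ ∈ ℕ and v : Fin(2^ℓ) → ℝ with v_j ≥ 0 for all j, define reduce(v) recursively: if ℓ = 0 then reduce(v) = v₀; otherwise reduce(v) = reduce(w) where w : Fin(2^{ℓ−1}) → ℝ is given by w_j = m(v_{2j}, v_{2j+1}). Then |reduce(v) − ‖v‖₂| ≤ ((1 + δ)^ℓ − 1)·‖v‖₂, where ‖v‖₂ = sqrt(Σ_j v_j²). -/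

import Mathlib

lemma sum_split (n : ℕ) (f : Fin (2 * n) → ℝ) :
    ∑ i, f i = ∑ j : Fin n, (f ⟨2 * j.val, by omega⟩ + f ⟨2 * j.val + 1, by omega⟩) := by
  rw [← Equiv.sum_comp ((finProdFinEquiv (m := n) (n := 2)).trans (finCongr (by ring))) f]
  rw [Fintype.sum_prod_type]
  refine Finset.sum_congr rfl fun j _ => ?_
  rw [Fin.sum_univ_two]
  congr 1 <;> · congr 1; ext; simp [finCongr]; try omega


lemma two_mul_lt {ℓ : ℕ} (j : Fin (2 ^ ℓ)) : 2 * j.val < 2 ^ (ℓ + 1) := by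
  have hj := j.isLt
  have h2 : (2 : ℕ) ^ (ℓ + 1) = 2 * 2 ^ ℓ := by rw [pow_succ]; ring
  omega

lemma two_mul_add_one_lt {ℓ : ℕ} (j : Fin (2 ^ ℓ)) : 2 * j.val + 1 < 2 ^ (ℓ + 1) := by
  have hj := j.isLt
  have h2 : (2 : ℕ) ^ (ℓ + 1) = 2 * 2 ^ ℓ := by rw [pow_succ]; ring
  omega

/-- Binary-tree reduction of a vector of length `2^ℓ` using a pairwise merge `m`. -/
noncomputable def treeReduce (m : ℝ → ℝ → ℝ) : (ℓ : ℕ) → (Fin (2 ^ ℓ) → ℝ) → ℝ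
  | 0, v => v ⟨0, by norm_num⟩
  | ℓ + 1, v => treeReduce m ℓ (fun j =>
      m (v ⟨2 * j.val, by
            have hj := j.isLt
            have h2 : (2 : ℕ) ^ (ℓ + 1) = 2 * 2 ^ ℓ := by rw [pow_succ]; ring
            omega⟩)
        (v ⟨2 * j.val + 1, by
            have hj := j.isLt
            have h2 : (2 : ℕ) ^ (ℓ + 1) = 2 * 2 ^ ℓ := by rw [pow_succ]; ring
            omega⟩))

/-- Binary-tree CORDIC accumulation error: if each pairwise merge approximates
`(a, b) ↦ sqrt (a² + b²)` with relative error at most `δ` on nonnegative inputs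
(and yields nonnegative outputs), then the tree reduction of height `ℓ` approximates
the Euclidean norm with relative error at most `(1 + δ)^ℓ - 1`. -/
theorem treeReduce_norm_error
    (δ : ℝ) (hδ0 : 0 ≤ δ) (hδ1 : δ < 1) (m : ℝ → ℝ → ℝ)
    (hm : ∀ a b : ℝ, 0 ≤ a → 0 ≤ b →
      0 ≤ m a b ∧ |m a b - Real.sqrt (a ^ 2 + b ^ 2)| ≤ δ * Real.sqrt (a ^ 2 + b ^ 2))
    (ℓ : ℕ) (v : Fin (2 ^ ℓ) → ℝ) (hv : ∀ j, 0 ≤ v j) :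
    |treeReduce m ℓ v - Real.sqrt (∑ j, (v j) ^ 2)| ≤
      ((1 + δ) ^ ℓ - 1) * Real.sqrt (∑ j, (v j) ^ 2) := by
  induction ℓ with
  | zero =>
    have h0 : ∑ j, (v j) ^ 2 = (v ⟨0, by norm_num⟩) ^ 2 := by
      simp [Finset.sum_fin_eq_sum_range]
    rw [treeReduce, h0, Real.sqrt_sq (hv _)]
    simp
  | succ ℓ ih =>
    set w : Fin (2 ^ ℓ) → ℝ := fun j =>
      m (v ⟨2 * j.val, two_mul_lt j⟩)
        (v ⟨2 * j.val + 1, two_mul_add_one_lt j⟩) with hwdef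
    have hw : ∀ j, 0 ≤ w j := fun j => (hm _ _ (hv _) (hv _)).1
    have htr : treeReduce m (ℓ + 1) v = treeReduce m ℓ w := rfl
    -- u j = exact pairwise norm
    set u : Fin (2 ^ ℓ) → ℝ := fun j =>
      Real.sqrt ((v ⟨2 * j.val, two_mul_lt j⟩) ^ 2 +
        (v ⟨2 * j.val + 1, two_mul_add_one_lt j⟩) ^ 2) with hudef
    have hu : ∀ j, 0 ≤ u j := fun j => Real.sqrt_nonneg _
    have hwu : ∀ j, |w j - u j| ≤ δ * u j := fun j => (hm _ _ (hv _) (hv _)).2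
    -- sum of u² equals sum of v²
    have hsum : ∑ j, (u j) ^ 2 = ∑ j, (v j) ^ 2 := by
      have h2 : (2 : ℕ) ^ (ℓ + 1) = 2 * 2 ^ ℓ := by rw [pow_succ]; ring
      have := sum_split (2 ^ ℓ) (fun i => (v (Fin.cast h2.symm i)) ^ 2)
      have hL : ∑ j, (v j) ^ 2 = ∑ i : Fin (2 * 2 ^ ℓ), (v (Fin.cast h2.symm i)) ^ 2 :=
        Fintype.sum_equiv (finCongr h2) _ _ (fun j => rfl)
      rw [hL, this]
      refine Finset.sum_congr rfl fun j _ => ?_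
      rw [hudef]
      rw [Real.sq_sqrt (by positivity)]
      rfl
    set Sv := Real.sqrt (∑ j, (v j) ^ 2) with hSv
    have hSv0 : 0 ≤ Sv := Real.sqrt_nonneg _
    -- bound ∑ w² between (1±δ)² ∑ u²
    have hwub : ∀ j, w j ≤ (1 + δ) * u j := by
      intro j
      have := abs_le.1 (hwu j)
      linarith [this.2]
    have hwlb : ∀ j, (1 - δ) * u j ≤ w j := by
      intro j
      have := abs_le.1 (hwu j)
      linarith [this.1]
    have hsq_ub : ∑ j, (w j) ^ 2 ≤ (1 + δ) ^ 2 * ∑ j, (u j) ^ 2 := by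
      rw [Finset.mul_sum]
      refine Finset.sum_le_sum fun j _ => ?_
      have h1 : (1 + δ) ^ 2 * (u j) ^ 2 = ((1 + δ) * u j) ^ 2 := by ring
      rw [h1]
      exact pow_le_pow_left₀ (hw j) (hwub j) 2
    have hsq_lb : (1 - δ) ^ 2 * ∑ j, (u j) ^ 2 ≤ ∑ j, (w j) ^ 2 := by
      rw [Finset.mul_sum]
      refine Finset.sum_le_sum fun j _ => ?_
      have h1 : (1 - δ) ^ 2 * (u j) ^ 2 = ((1 - δ) * u j) ^ 2 := by ring
      rw [h1]
      exact pow_le_pow_left₀ (mul_nonneg (by linarith) (hu j)) (hwlb j) 2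
    set Sw := Real.sqrt (∑ j, (w j) ^ 2) with hSw
    have hSw0 : 0 ≤ Sw := Real.sqrt_nonneg _
    have hSuSv : Real.sqrt (∑ j, (u j) ^ 2) = Sv := by rw [hsum]
    have hSw_ub : Sw ≤ (1 + δ) * Sv := by
      rw [hSw, ← hSuSv]
      calc Real.sqrt (∑ j, (w j) ^ 2) ≤ Real.sqrt ((1 + δ) ^ 2 * ∑ j, (u j) ^ 2) :=
            Real.sqrt_le_sqrt hsq_ub
        _ = (1 + δ) * Real.sqrt (∑ j, (u j) ^ 2) := by
            rw [Real.sqrt_mul (by positivity), Real.sqrt_sq (by linarith)]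
    have hSw_lb : (1 - δ) * Sv ≤ Sw := by
      rw [hSw, ← hSuSv]
      calc (1 - δ) * Real.sqrt (∑ j, (u j) ^ 2)
          = Real.sqrt ((1 - δ) ^ 2 * ∑ j, (u j) ^ 2) := by
            rw [Real.sqrt_mul (by positivity), Real.sqrt_sq (by linarith)]
        _ ≤ Real.sqrt (∑ j, (w j) ^ 2) := Real.sqrt_le_sqrt hsq_lb
    have hih := ih w hw
    rw [htr]
    have h1 : |treeReduce m ℓ w - Sv| ≤ |treeReduce m ℓ w - Sw| + |Sw - Sv| := by
      have := abs_sub_abs_le_abs_sub (treeReduce m ℓ w - Sv) (treeReduce m ℓ w - Sw)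
      calc |treeReduce m ℓ w - Sv| = |(treeReduce m ℓ w - Sw) + (Sw - Sv)| := by ring_nf
        _ ≤ _ := abs_add_le _ _
    have h2 : |Sw - Sv| ≤ δ * Sv := by
      rw [abs_le]; constructor <;> nlinarith
    have h3 : (1 + δ) ^ ℓ - 1 ≥ 0 := by
      have : (1:ℝ) ≤ (1 + δ) ^ ℓ := one_le_pow₀ (by linarith)
      linarith
    calc |treeReduce m ℓ w - Sv| ≤ |treeReduce m ℓ w - Sw| + |Sw - Sv| := h1
      _ ≤ ((1 + δ) ^ ℓ - 1) * Sw + δ * Sv := add_le_add hih h2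
      _ ≤ ((1 + δ) ^ ℓ - 1) * ((1 + δ) * Sv) + δ * Sv :=
          add_le_add_left (mul_le_mul_of_nonneg_left hSw_ub h3) _
      _ = ((1 + δ) ^ (ℓ + 1) - 1) * Sv := by ring
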